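/- In the Markovian user model, sort the bidders so that a_1 ≥ a_2 ≥ … ≥ a_n, and define F(i, j) for 1 ≤ i ≤ n+1 and 1 ≤ j ≤ k+1 by F(n+1, j) = 0 for all j, F(i, k+1) = 0 for all i, and F(i, j) = max( F(i+1, j+1)·q_i + e_i , F(i+1, j) ) otherwise. Then F(1, 1) equals the maximum efficiency over all injective assignments of bidders to the k positions. -/

import Mathlib

/-- Efficiency of an assignment `x` of bidders to `k` positions in the
Markovian user model: `Σ_j e (x j) · Π_{l < j} q (x l)`. -/
noncomputable def eff (n : ℕ) (e q : Fin n → ℝ) (k : ℕ) (x : Fin k → Fin n) : ℝ :=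
  ∑ j : Fin k, e (x j) * ∏ l ∈ Finset.univ.filter (fun l => l < j), q (x l)

noncomputable def mval {n : ℕ} (e q : Fin n → ℝ) : List (Fin n) → ℝ
  | [] => 0
  | b :: L => e b + q b * mval e q L

lemma mval_nonneg {n : ℕ} (e q : Fin n → ℝ) (he : ∀ i, 0 ≤ e i) (hq0 : ∀ i, 0 ≤ q i) :
    ∀ L : List (Fin n), 0 ≤ mval e q L
  | [] => le_refl 0
  | b :: L => by
      have := mval_nonneg e q he hq0 L
      exact add_nonneg (he b) (mul_nonneg (hq0 b) this)

lemma mval_append {n : ℕ} (e q : Fin n → ℝ) :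
    ∀ L M : List (Fin n), mval e q (L ++ M) = mval e q L + (L.map q).prod * mval e q M
  | [], M => by simp [mval]
  | b :: L, M => by
      simp [mval, mval_append e q L M]; ring

lemma filter_lt_succ {k : ℕ} (j : Fin k) :
    (Finset.univ.filter (fun l => l < Fin.succ j) : Finset (Fin (k+1))) =
      insert 0 ((Finset.univ.filter (fun l => l < j)).map (Fin.succEmb k)) := by
  ext a
  induction a using Fin.cases with
  | zero => simp [Fin.succ_pos]
  | succ a => simp [Fin.succ_lt_succ_iff, Fin.succ_ne_zero, Fin.succEmb]

lemma eff_eq_mval (n : ℕ) (e q : Fin n → ℝ) :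
    ∀ (k : ℕ) (x : Fin k → Fin n), eff n e q k x = mval e q (List.ofFn x)
  | 0, x => by simp [eff, mval]
  | k + 1, x => by
      rw [List.ofFn_succ]
      simp only [mval]
      rw [← eff_eq_mval n e q k (fun i => x i.succ)]
      unfold eff
      rw [Fin.sum_univ_succ]
      congr 1
      · simp
      · rw [Finset.mul_sum]
        refine Finset.sum_congr rfl fun j _ => ?_
        rw [filter_lt_succ j, Finset.prod_insert (by simp [Fin.succ_ne_zero, Fin.succEmb]),
          Finset.prod_map]
        simp [Fin.succEmb]
        ring

lemma mval_exchange {n : ℕ} (e q : Fin n → ℝ) (hq0 : ∀ i, 0 ≤ q i) (b : Fin n) :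
    ∀ L : List (Fin n), b ∈ L →
      (∀ u ∈ L, e u * (1 - q b) ≤ e b * (1 - q u)) →
      mval e q L ≤ e b + q b * mval e q (L.erase b)
  | [], hb, _ => by simp at hb
  | u :: L, hb, hmax => by
      by_cases hub : u = b
      · subst hub
        simp [List.erase_cons_head, mval, le_refl]
      · have hbL : b ∈ L := by
          rcases List.mem_cons.mp hb with h | h
          · exact absurd h.symm hub
          · exact h
        have ih := mval_exchange e q hq0 b L hbL (fun v hv => hmax v (List.mem_cons_of_mem _ hv))
        have herase : (u :: L).erase b = u :: L.erase b := by
          rw [List.erase_cons_tail]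
          simp [hub]
        rw [herase]
        have hswap : e u + q u * e b ≤ e b + q b * e u := by
          have := hmax u List.mem_cons_self
          nlinarith
        have h1 : q u * mval e q L ≤ q u * (e b + q b * mval e q (L.erase b)) :=
          mul_le_mul_of_nonneg_left ih (hq0 u)
        simp only [mval]
        nlinarith

lemma dp_upper (n k : ℕ) (e q : Fin n → ℝ)
    (hq0 : ∀ i, 0 ≤ q i) (hq1 : ∀ i, q i < 1)
    (hsorted : Antitone (fun i : Fin n => e i / (1 - q i)))
    (F : ℕ → ℕ → ℝ)
    (hFn : ∀ j, F (n + 1) j = 0)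
    (hFk : ∀ i, F i (k + 1) = 0)
    (hF : ∀ i : Fin n, ∀ j : ℕ, 1 ≤ j → j ≤ k →
      F (i.val + 1) j =
        max (F (i.val + 2) (j + 1) * q i + e i) (F (i.val + 2) j)) :
    ∀ (d i m : ℕ) (L : List (Fin n)), i ≤ n → n - i = d → m ≤ k →
      (∀ u ∈ L, i ≤ u.val) → L.Nodup → L.length ≤ m →
      mval e q L ≤ F (i + 1) (k + 1 - m) := by
  intro d
  induction d with
  | zero =>
      intro i m L hi hd hm hL hnd hlen
      have hin : i = n := by omega
      subst hin
      match L with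
      | [] => simp [mval, hFn]
      | u :: L => exact absurd (hL u List.mem_cons_self) (by omega)
  | succ d ih =>
      intro i m L hi hd hm hL hnd hlen
      have hilt : i < n := by omega
      set b : Fin n := ⟨i, hilt⟩ with hb
      match m, hm with
      | 0, hm =>
          match L, hlen with
          | [], _ =>
            simp only [mval, Nat.sub_zero, hFk]
            exact le_rfl
      | m + 1, hm =>
          have hrec := hF b (k - m) (by omega) (by omega)
          have h1 : (k : ℕ) - m + 1 = k + 1 - m := by omega
          have h2 : (k : ℕ) + 1 - (m + 1) = k - m := by omega
          rw [h1] at hrec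
          rw [h2]
          simp only [hb] at hrec
          rw [hrec]
          by_cases hbL : b ∈ L
          · have hmax : ∀ u ∈ L, e u * (1 - q b) ≤ e b * (1 - q u) := by
              intro u hu
              have hle : b ≤ u := by
                simp only [hb, Fin.le_def]
                exact hL u hu
              have := hsorted hle
              exact (div_le_div_iff₀ (by linarith [hq1 u]) (by linarith [hq1 b])).mp this
            have hex := mval_exchange e q hq0 b L hbL hmax
            have hih := ih (i + 1) m (L.erase b) (by omega) (by omega) (by omega)
              (fun u hu => by
                have h := (hnd.mem_erase_iff).mp hu
                have := hL u h.2
                have : u.val ≠ i := fun hc => h.1 (Fin.ext hc)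
                omega)
              (hnd.erase b)
              (by
                have := List.length_erase_of_mem hbL
                omega)
            calc mval e q L ≤ e b + q b * mval e q (L.erase b) := hex
              _ ≤ e b + q b * F (i + 1 + 1) (k + 1 - m) := by
                  have := mul_le_mul_of_nonneg_left hih (hq0 b)
                  linarith
              _ = F (i + 2) (k + 1 - m) * q b + e b := by ring_nf
              _ ≤ _ := le_max_left _ _
          · have hih := ih (i + 1) (m + 1) L (by omega) (by omega) (by omega)
              (fun u hu => by
                have := hL u hu
                have : u.val ≠ i := fun hc => hbL ((Fin.ext hc : u = b) ▸ hu)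
                omega)
              hnd hlen
            rw [h2] at hih
            calc mval e q L ≤ F (i + 1 + 1) (k - m) := hih
              _ ≤ _ := le_max_right _ _

lemma dp_lower (n k : ℕ) (e q : Fin n → ℝ)
    (hq0 : ∀ i, 0 ≤ q i)
    (F : ℕ → ℕ → ℝ)
    (hFn : ∀ j, F (n + 1) j = 0)
    (hFk : ∀ i, F i (k + 1) = 0)
    (hF : ∀ i : Fin n, ∀ j : ℕ, 1 ≤ j → j ≤ k →
      F (i.val + 1) j =
        max (F (i.val + 2) (j + 1) * q i + e i) (F (i.val + 2) j)) :
    ∀ (d i m : ℕ), i ≤ n → n - i = d → m ≤ k →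
      ∃ L : List (Fin n), (∀ u ∈ L, i ≤ u.val) ∧ L.Nodup ∧ L.length ≤ m ∧
        F (i + 1) (k + 1 - m) ≤ mval e q L := by
  intro d
  induction d with
  | zero =>
      intro i m hi hd hm
      have hin : i = n := by omega
      subst hin
      exact ⟨[], by simp, List.nodup_nil, by simp, by simp [mval, hFn]⟩
  | succ d ih =>
      intro i m hi hd hm
      have hilt : i < n := by omega
      set b : Fin n := ⟨i, hilt⟩ with hb
      match m, hm with
      | 0, hm =>
          exact ⟨[], by simp, List.nodup_nil, by simp, by simp [mval, hFk]⟩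
      | m + 1, hm =>
          have hrec := hF b (k - m) (by omega) (by omega)
          have h1 : (k : ℕ) - m + 1 = k + 1 - m := by omega
          have h2 : (k : ℕ) + 1 - (m + 1) = k - m := by omega
          rw [h1] at hrec
          simp only [hb] at hrec
          rw [h2, hrec]
          rcases le_total (F (i + 2) (k + 1 - m) * q b + e b) (F (i + 2) (k - m)) with hc | hc
          · obtain ⟨L, hL, hnd, hlen, hval⟩ := ih (i + 1) (m + 1) (by omega) (by omega) (by omega)
            rw [h2] at hval
            refine ⟨L, fun u hu => by have := hL u hu; omega, hnd, hlen, ?_⟩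
            rw [max_eq_right hc]
            exact hval
          · obtain ⟨L, hL, hnd, hlen, hval⟩ := ih (i + 1) m (by omega) (by omega) (by omega)
            refine ⟨b :: L, ?_, ?_, by simpa using hlen, ?_⟩
            · rintro u hu
              rcases List.mem_cons.mp hu with h | h
              · simp [h, hb]
              · have := hL u h; omega
            · exact List.nodup_cons.mpr ⟨fun hmem => by have := hL b hmem; simp [hb] at this, hnd⟩
            · rw [max_eq_left hc]
              simp only [mval]
              have := mul_le_mul_of_nonneg_left hval (hq0 b)
              linarith

/-- The dynamic program for the optimal assignment: with the bidders sorted in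
nonincreasing order of adjusted ecpm `a_i = e_i/(1 − q_i)` (1-indexed,
bidder `i : Fin n` being the `(i+1)`-st), define `F i j` for
`1 ≤ i ≤ n+1`, `1 ≤ j ≤ k+1` by `F (n+1) j = 0`, `F i (k+1) = 0`, and
otherwise `F i j = max (F (i+1) (j+1)·q_i + e_i) (F (i+1) j)`.  Then `F 1 1`
is the maximum efficiency over all injective assignments of bidders to the
`k` positions. -/
theorem dynamic_program_computes_optimum (n k : ℕ) (hk : k ≤ n)
    (e q : Fin n → ℝ) (he : ∀ i, 0 ≤ e i)
    (hq0 : ∀ i, 0 ≤ q i) (hq1 : ∀ i, q i < 1)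
    (hsorted : Antitone (fun i : Fin n => e i / (1 - q i)))
    (F : ℕ → ℕ → ℝ)
    (hFn : ∀ j, F (n + 1) j = 0)
    (hFk : ∀ i, F i (k + 1) = 0)
    (hF : ∀ i : Fin n, ∀ j : ℕ, 1 ≤ j → j ≤ k →
      F (i.val + 1) j =
        max (F (i.val + 2) (j + 1) * q i + e i) (F (i.val + 2) j)) :
    IsGreatest {r : ℝ | ∃ x : Fin k → Fin n,
      Function.Injective x ∧ r = eff n e q k x} (F 1 1) := by
  have hk1 : k + 1 - k = 1 := by omega
  -- Upper bound
  have hub : ∀ r ∈ {r : ℝ | ∃ x : Fin k → Fin n,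
      Function.Injective x ∧ r = eff n e q k x}, r ≤ F 1 1 := by
    rintro r ⟨x, hx, rfl⟩
    rw [eff_eq_mval]
    have := dp_upper n k e q hq0 hq1 hsorted F hFn hFk hF n 0 k (List.ofFn x)
      (Nat.zero_le n) (by omega) le_rfl (fun u _ => Nat.zero_le _)
      (List.nodup_ofFn.mpr hx) (by simp)
    rwa [hk1] at this
  refine ⟨?_, hub⟩
  -- Membership: construct an assignment achieving F 1 1
  obtain ⟨L, -, hndL, hlenL, hvalL⟩ :=
    dp_lower n k e q hq0 F hFn hFk hF n 0 k (Nat.zero_le n) (by omega) le_rfl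
  rw [hk1] at hvalL
  set M : List (Fin n) := (List.finRange n).filter (fun a => a ∉ L) with hM
  have hndM : M.Nodup := (List.nodup_finRange n).filter _
  have hdisj : L.Disjoint M := by
    intro a haL haM
    simp [hM, List.mem_filter] at haM
    exact haM haL
  have hndF : (L ++ M).Nodup := hndL.append hndM hdisj
  have hlenF : n ≤ (L ++ M).length := by
    have huniv : (L ++ M).toFinset = Finset.univ := by
      refine Finset.eq_univ_of_forall fun a => ?_
      rw [List.mem_toFinset, List.mem_append]
      by_cases h : a ∈ L
      · exact Or.inl h
      · exact Or.inr (by rw [hM, List.mem_filter]; simp [h])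
    have hc := List.toFinset_card_of_nodup hndF
    rw [huniv] at hc
    simp at hc
    rw [List.length_append]
    omega
  set T : List (Fin n) := (L ++ M).take k with hT
  have hndT : T.Nodup := (List.take_sublist k (L ++ M)).nodup hndF
  have hlenT : T.length = k := by
    rw [hT, List.length_take]
    omega
  -- T = L ++ (M.take (k - L.length))
  have hTL : T = L ++ M.take (k - L.length) := by
    rw [hT, show k = L.length + (k - L.length) by omega, List.take_append, Nat.add_sub_cancel_left,
      List.take_of_length_le (Nat.le_add_right _ _)]
  set x : Fin k → Fin n := fun j => T.get ⟨j.val, by omega⟩ with hx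
  have hofn : List.ofFn x = T := by
    apply List.ext_get (by simp [hlenT])
    intro i h1 h2
    simp [hx, List.get_ofFn]
  have hinj : Function.Injective x := List.nodup_ofFn.mp (hofn ▸ hndT)
  refine ⟨x, hinj, ?_⟩
  have heq : eff n e q k x = mval e q T := by rw [eff_eq_mval, hofn]
  have hge : F 1 1 ≤ eff n e q k x := by
    rw [heq, hTL, mval_append]
    have h1 : 0 ≤ (L.map q).prod :=
      List.prod_nonneg (by rintro a ha; rw [List.mem_map] at ha
                           obtain ⟨b, -, rfl⟩ := ha; exact hq0 b)
    have h2 : 0 ≤ mval e q (M.take (k - L.length)) := mval_nonneg e q he hq0 _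
    nlinarith
  have hle : eff n e q k x ≤ F 1 1 := hub _ ⟨x, hinj, rfl⟩
  linarith
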